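/- Let R be a p-torsion free perfectoid ring with compatible roots ϖ_n of p, and let R[1/p]° denote the subring of powerbounded elements of the Tate ring R[1/p]. Then for every n ≥ 1, ϖ_n kills the cokernel of the inclusion R ⊆ R[1/p]°; i.e., ϖ_n · R[1/p]° ⊆ R. -/

import Mathlib

/-- The defining conditions on `ϖ` for a `p`-torsion free perfectoid ring. -/
def PerfectoidCond (p : ℕ) (R : Type*) [CommRing R] (ϖ : R) : Prop :=
  Ideal.span {ϖ ^ p} = Ideal.span {(p : R)} ∧
  (∀ y : R, ∃ x : R, y - x ^ p ∈ Ideal.span {(p : R)}) ∧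
  (∀ x : R, x ^ p ∈ Ideal.span {(p : R)} → x ∈ Ideal.span {ϖ})

/-- An element of R[1/p] is powerbounded if its powers lie in p^{-k}·R for some k. -/
def PowerBounded (p : ℕ) (R : Type*) [CommRing R] (t : Localization.Away (p : R)) : Prop :=
  ∃ k : ℕ, ∀ m : ℕ, 1 ≤ m → ∃ r : R,
    algebraMap R (Localization.Away (p : R)) ((p : R) ^ k) * t ^ m =
      algebraMap R (Localization.Away (p : R)) r

lemma aux_base {p : ℕ} (hp : 1 ≤ p) {R : Type*} [CommRing R] {ϖ : R}
    (hϖnzd : ϖ ∈ nonZeroDivisors R)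
    (cond3 : ∀ x : R, (p : R) ∣ x ^ p → ϖ ∣ x)
    (hpd : (p : R) ∣ ϖ ^ p) :
    ∀ (c : ℕ) (z : R), ϖ ^ (p * c) ∣ z ^ p → ϖ ^ c ∣ z := by
  intro c
  induction c with
  | zero => intro z _; simpa using one_dvd z
  | succ c ih =>
    intro z hz
    have h1 : (p : R) ∣ z ^ p := by
      refine hpd.trans (dvd_trans ?_ hz)
      exact pow_dvd_pow ϖ (Nat.le_mul_of_pos_right p (Nat.succ_pos c))
    obtain ⟨y, rfl⟩ := cond3 z h1
    rw [mul_pow] at hz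
    obtain ⟨w, hw⟩ := hz
    have hw' : ϖ ^ p * y ^ p = ϖ ^ p * (ϖ ^ (p * c) * w) := by
      rw [hw, ← mul_assoc, ← pow_add]; ring_nf
    have hcancel : y ^ p = ϖ ^ (p * c) * w :=
      (mul_cancel_left_mem_nonZeroDivisors (pow_mem hϖnzd p)).mp hw'
    obtain ⟨v, hv⟩ := ih y ⟨w, hcancel⟩
    exact ⟨v, by rw [hv, pow_succ]; ring⟩

lemma aux_iter {p : ℕ} (hp : 1 ≤ p) {R : Type*} [CommRing R] {ϖ : R}
    (hϖnzd : ϖ ∈ nonZeroDivisors R)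
    (cond3 : ∀ x : R, (p : R) ∣ x ^ p → ϖ ∣ x)
    (hpd : (p : R) ∣ ϖ ^ p) :
    ∀ (i : ℕ) (z : R) (c : ℕ), ϖ ^ (p ^ i * c) ∣ z ^ p ^ i → ϖ ^ c ∣ z := by
  intro i
  induction i with
  | zero => intro z c h; simpa using h
  | succ i ih =>
    intro z c h
    have h' : ϖ ^ (p ^ i * (p * c)) ∣ (z ^ p) ^ p ^ i := by
      have e1 : p ^ i * (p * c) = p ^ (i + 1) * c := by ring
      have e2 : (z ^ p) ^ p ^ i = z ^ p ^ (i + 1) := by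
        rw [← pow_mul, pow_succ]; ring_nf
      rw [e1, e2]; exact h
    exact aux_base hp hϖnzd cond3 hpd c z (ih (z ^ p) (p * c) h')

theorem stmt_13 {p : ℕ} (hp : p.Prime) (R : Type*) [CommRing R]
    (hnzd : (p : R) ∈ nonZeroDivisors R)
    (hc : IsAdicComplete (Ideal.span {(p : R)}) R)
    (ϖ : R) (hϖ : PerfectoidCond p R ϖ)
    (ϖs : ℕ → R) (hseq : ∀ n, ϖs (n + 1) ^ p = ϖs n)
    (h0 : Ideal.span {ϖs 0} = Ideal.span {ϖ})
    (hspan : ∀ n, Ideal.span {ϖs n ^ p ^ (n + 1)} = Ideal.span {(p : R)}) :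
    ∀ t : Localization.Away (p : R), PowerBounded p R t →
      ∀ n : ℕ, ∃ r : R,
        algebraMap R (Localization.Away (p : R)) (ϖs n) * t =
          algebraMap R (Localization.Away (p : R)) r := by
  classical
  obtain ⟨h1, _h2, h3⟩ := hϖ
  have hp1 : 1 ≤ p := hp.one_lt.le.trans' (by norm_num)
  have hπdvd_p : ϖ ^ p ∣ (p : R) := by
    rw [← Ideal.mem_span_singleton, h1]; exact Ideal.mem_span_singleton_self _
  have hp_dvd_π : (p : R) ∣ ϖ ^ p := by
    rw [← Ideal.mem_span_singleton, ← h1]; exact Ideal.mem_span_singleton_self _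
  have cond3 : ∀ x : R, (p : R) ∣ x ^ p → ϖ ∣ x := fun x hx => by
    have := h3 x (by rw [Ideal.mem_span_singleton]; exact hx)
    rwa [Ideal.mem_span_singleton] at this
  have hϖnzd : ϖ ∈ nonZeroDivisors R := by
    rw [mem_nonZeroDivisors_iff_right]
    intro x hx
    obtain ⟨d, hd⟩ := hπdvd_p
    apply mem_nonZeroDivisors_iff_right.mp hnzd
    have hsplit : x * (p : R) = (x * ϖ) * (ϖ ^ (p - 1) * d) := by
      rw [hd]
      have : ϖ ^ p = ϖ * ϖ ^ (p - 1) := by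
        conv_lhs => rw [← Nat.sub_add_cancel hp1]
        rw [pow_succ]; ring
      rw [this]; ring
    rw [hsplit, hx, zero_mul]
  have hMle : Submonoid.powers ((p : ℕ) : R) ≤ nonZeroDivisors R :=
    Submonoid.powers_le.mpr hnzd
  have hinj : Function.Injective (algebraMap R (Localization.Away (p : R))) :=
    IsLocalization.injective _ hMle
  intro t ht n
  obtain ⟨k, hk⟩ := ht
  obtain ⟨⟨a0, s⟩, hs⟩ := IsLocalization.surj (Submonoid.powers ((p : ℕ) : R)) t
  obtain ⟨j0, hj0⟩ := s.2
  set J := j0 + 1 with hJ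
  set a := a0 * (p : R) with ha_def
  have ha : t * algebraMap R (Localization.Away (p : R)) ((p : R) ^ J) =
      algebraMap R (Localization.Away (p : R)) a := by
    have hps : ((p : R) ^ J) = (s : R) * (p : R) := by rw [← hj0, pow_succ]
    rw [hps, map_mul, ← mul_assoc, hs, ← map_mul]
  set i := n + 1 + k with hi
  set m := p ^ i with hm
  have hm1 : 1 ≤ m := Nat.one_le_iff_ne_zero.mpr (pow_ne_zero i hp.pos.ne')
  obtain ⟨r, hr⟩ := hk m hm1
  have key : (p : R) ^ k * a ^ m = r * (p : R) ^ (J * m) := by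
    apply hinj
    calc algebraMap R (Localization.Away (p : R)) ((p : R) ^ k * a ^ m)
        = algebraMap R (Localization.Away (p : R)) ((p : R) ^ k) *
            (algebraMap R (Localization.Away (p : R)) a) ^ m := by
          simp only [map_mul, map_pow]
      _ = algebraMap R (Localization.Away (p : R)) ((p : R) ^ k) *
            (t * algebraMap R (Localization.Away (p : R)) ((p : R) ^ J)) ^ m := by rw [ha]
      _ = (algebraMap R (Localization.Away (p : R)) ((p : R) ^ k) * t ^ m) *
            (algebraMap R (Localization.Away (p : R)) ((p : R) ^ J)) ^ m := by ring
      _ = algebraMap R (Localization.Away (p : R)) r *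
            (algebraMap R (Localization.Away (p : R)) ((p : R) ^ J)) ^ m := by rw [hr]
      _ = algebraMap R (Localization.Away (p : R)) (r * (p : R) ^ (J * m)) := by
          rw [← map_pow, ← pow_mul, ← map_mul]
  have hkk : k ≤ p ^ k := (Nat.lt_pow_self (n := k) hp.one_lt).le
  have hkm : k ≤ J * m := by
    calc k ≤ m := hkk.trans (Nat.pow_le_pow_right hp.pos (by omega))
      _ ≤ J * m := Nat.le_mul_of_pos_left m (by omega)
  set e := J * m - k with he
  have hke : k + e = J * m := by omega
  have ha_pow : a ^ m = r * (p : R) ^ e := by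
    have h' : (p : R) ^ k * a ^ m = (p : R) ^ k * (r * (p : R) ^ e) := by
      rw [key, ← hke, pow_add]; ring
    exact (mul_cancel_left_mem_nonZeroDivisors (pow_mem hnzd k)).mp h'
  have hws : (p : R) ∣ ϖs n ^ p ^ (n + 1) := by
    rw [← Ideal.mem_span_singleton, ← hspan n]; exact Ideal.mem_span_singleton_self _
  have hws2 : (p : R) ^ p ^ k ∣ ϖs n ^ m := by
    have hws3 : ϖs n ^ m = (ϖs n ^ p ^ (n + 1)) ^ p ^ k := by
      rw [← pow_mul, ← pow_add, hm, hi]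
    rw [hws3]
    exact pow_dvd_pow_of_dvd hws _
  set x := ϖs n * a with hx_def
  have hxm : (p : R) ^ (p ^ k + e) ∣ x ^ m := by
    rw [hx_def, mul_pow, ha_pow, pow_add]
    exact mul_dvd_mul hws2 (Dvd.intro_left r rfl)
  have hxϖ : ϖ ^ (p * (p ^ k + e)) ∣ x ^ m := by
    refine dvd_trans ?_ hxm
    rw [pow_mul]
    exact pow_dvd_pow_of_dvd hπdvd_p _
  have harith : m * (p * J) ≤ p * (p ^ k + e) := by
    have h2 : p * (J * m) = p * k + p * e := by rw [← hke]; ring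
    calc m * (p * J) = p * k + p * e := by rw [← h2]; ring
      _ ≤ p * p ^ k + p * e := Nat.add_le_add_right (Nat.mul_le_mul_left p hkk) _
      _ = p * (p ^ k + e) := by ring
  have hxϖ2 : ϖ ^ (m * (p * J)) ∣ x ^ m := (pow_dvd_pow ϖ harith).trans hxϖ
  have hxfin : ϖ ^ (p * J) ∣ x := by
    rw [hm] at hxϖ2
    exact aux_iter hp1 hϖnzd cond3 hp_dvd_π i x (p * J) hxϖ2
  have hpx : (p : R) ^ J ∣ x := by
    refine dvd_trans ?_ hxfin
    rw [pow_mul]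
    exact pow_dvd_pow_of_dvd hp_dvd_π J
  obtain ⟨b, hb⟩ := hpx
  refine ⟨b, ?_⟩
  have hmem : ((p : R) ^ J) ∈ Submonoid.powers ((p : ℕ) : R) := ⟨J, rfl⟩
  have hu : IsUnit (algebraMap R (Localization.Away (p : R)) ((p : R) ^ J)) :=
    IsLocalization.map_units (Localization.Away (p : R))
      (⟨(p : R) ^ J, hmem⟩ : Submonoid.powers ((p : ℕ) : R))
  apply hu.mul_left_cancel
  calc algebraMap R (Localization.Away (p : R)) ((p : R) ^ J) *
        (algebraMap R (Localization.Away (p : R)) (ϖs n) * t)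
      = algebraMap R (Localization.Away (p : R)) (ϖs n) *
          (t * algebraMap R (Localization.Away (p : R)) ((p : R) ^ J)) := by ring
    _ = algebraMap R (Localization.Away (p : R)) (ϖs n) *
          algebraMap R (Localization.Away (p : R)) a := by rw [ha]
    _ = algebraMap R (Localization.Away (p : R)) ((p : R) ^ J * b) := by
        rw [← map_mul, ← hx_def, hb]
    _ = algebraMap R (Localization.Away (p : R)) ((p : R) ^ J) *
          algebraMap R (Localization.Away (p : R)) b := by rw [map_mul]
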